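/- Let E be a complex Banach space, π : B(E) → B(E)/K(E) the quotient onto the Calkin algebra, and A = (A₁,...,A_k), B = (B₁,...,B_k) two k-tuples in B(E). Then for every U ∈ B(E) whose image π(U) is unitary in the Calkin algebra, the essential numerical range V_e(Σᵢ U⁻¹AᵢUBᵢ) is contained in the numerical range of the elementary operator R_{π(A),π(B)} on the Calkin algebra. -/

import Mathlib

/-- Algebra numerical range of an element of a complex unital Banach algebra,
defined via states: `V(a) = {f a : f ∈ A*, ‖f‖ = 1 = f 1}`. -/
def numRange (A : Type*) [NormedRing A] [NormedAlgebra ℂ A] (a : A) : Set ℂ :=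
  {z | ∃ f : A →L[ℂ] ℂ, ‖f‖ = 1 ∧ f 1 = 1 ∧ f a = z}

theorem stmt10 (E : Type*) [NormedAddCommGroup E] [NormedSpace ℂ E] [CompleteSpace E]
    -- the Calkin algebra `C = B(E)/K(E)`, presented abstractly as the image of a
    -- surjective algebra homomorphism `π` whose norm is the quotient (essential) norm
    (C : Type*) [NormedRing C] [NormedAlgebra ℂ C] [CompleteSpace C] [NormOneClass C]
    (π : (E →L[ℂ] E) →ₐ[ℂ] C) (hπ_surj : Function.Surjective π)
    (hπ_ker : ∀ T : E →L[ℂ] E, π T = 0 ↔ IsCompactOperator T)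
    (hπ_norm : ∀ T : E →L[ℂ] E,
      ‖π T‖ = ⨅ K : {K : E →L[ℂ] E // IsCompactOperator K}, ‖T + (K : E →L[ℂ] E)‖)
    (k : ℕ) (A B : Fin k → (E →L[ℂ] E))
    (R : C →L[ℂ] C) (hR : ∀ x, R x = ∑ i, π (A i) * x * π (B i))
    (U : (E →L[ℂ] E)ˣ) (hU : ‖π (U : E →L[ℂ] E)‖ = 1)
    (hU' : ‖π ((U⁻¹ : (E →L[ℂ] E)ˣ) : E →L[ℂ] E)‖ = 1) :
    numRange C (π (∑ i, ((U⁻¹ : (E →L[ℂ] E)ˣ) : E →L[ℂ] E) * A i * (U : E →L[ℂ] E) * B i))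
      ⊆ numRange (C →L[ℂ] C) R := by
  rintro z ⟨f, hf1, hf2, hf3⟩
  set u : C := π (U : E →L[ℂ] E)
  set u' : C := π ((U⁻¹ : (E →L[ℂ] E)ˣ) : E →L[ℂ] E)
  have huu : u' * u = 1 := by
    rw [show u' * u = π (((U⁻¹ : (E →L[ℂ] E)ˣ) : E →L[ℂ] E) * (U : E →L[ℂ] E)) from
      (map_mul π _ _).symm, Units.inv_mul, map_one]
  -- g S = f (u' * S u)
  let g : (C →L[ℂ] C) →L[ℂ] ℂ :=
    f.comp ((ContinuousLinearMap.mul ℂ C u').comp (ContinuousLinearMap.apply ℂ C u))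
  have hg : ∀ S : C →L[ℂ] C, g S = f (u' * S u) := fun S => rfl
  have hgle : ‖g‖ ≤ 1 := by
    calc ‖g‖ ≤ ‖f‖ * ‖(ContinuousLinearMap.mul ℂ C u').comp (ContinuousLinearMap.apply ℂ C u)‖ :=
          ContinuousLinearMap.opNorm_comp_le _ _
      _ ≤ ‖f‖ * (‖ContinuousLinearMap.mul ℂ C u'‖ * ‖ContinuousLinearMap.apply ℂ C u‖) := by
          gcongr; exact ContinuousLinearMap.opNorm_comp_le _ _
      _ ≤ 1 * (1 * 1) := by
          gcongr
          · exact hf1.le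
          · exact le_trans (ContinuousLinearMap.opNorm_mul_apply_le ℂ C u') hU'.le
          · refine ContinuousLinearMap.opNorm_le_bound _ zero_le_one (fun S => ?_)
            calc ‖S u‖ ≤ ‖S‖ * ‖u‖ := S.le_opNorm u
              _ = ‖S‖ * 1 := by rw [hU]
              _ = 1 * ‖S‖ := by ring
      _ = 1 := by ring
  have hgone : g 1 = 1 := by
    rw [hg, ContinuousLinearMap.one_apply, huu, hf2]
  refine ⟨g, ?_, hgone, ?_⟩
  · refine le_antisymm hgle ?_
    have hnt : Nontrivial C := ⟨1, 0, fun h => by simpa [h] using (norm_one (α := C))⟩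
    have := g.le_opNorm 1
    rw [hgone, norm_one, show (1 : C →L[ℂ] C) = ContinuousLinearMap.id ℂ C from rfl,
      ContinuousLinearMap.norm_id, mul_one] at this
    simpa using this
  · rw [hg, hR, ← hf3]
    congr 1
    rw [map_sum, Finset.mul_sum]
    refine Finset.sum_congr rfl fun i _ => ?_
    simp only [map_mul, mul_assoc]
    rfl
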